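/- Let X be a simplicial set and let c be a k-sphere in X (k ≥ 1) whose faces c_0, …, c_k all have degeneracy at least 2. Let r be the minimal value of dgn(c_i) over 0 ≤ i ≤ k and let m be the smallest ordinal with dgn(c_m) = r. If k < 2r + 3, then c_m = c_{m+1}. -/

import Mathlib

open CategoryTheory CategoryTheory.Limits Simplicial

namespace AufhebungSSet

/-- An `n`-simplex `x` of a simplicial set `X` is degenerate if it is the image of a
simplex of strictly smaller dimension under the action of an epimorphism of `Δ`. -/
def IsDegen (X : SSet) {n : ℕ} (x : X _⦋n⦌) : Prop :=
  ∃ m : ℕ, m < n ∧ ∃ ε : (⦋n⦌ : SimplexCategory) ⟶ ⦋m⦌,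
    Function.Surjective ε.toOrderHom ∧ ∃ y : X _⦋m⦌, x = X.map ε.op y

/-- The degeneracy `dgn x = n - k`, where `k` is the least dimension from which `x`
is the image of a simplex under the action of an epimorphism; by the Eilenberg–Zilber
lemma this is the dimension of the nondegenerate simplex of which `x` is a degeneracy. -/
noncomputable def dgn (X : SSet) {n : ℕ} (x : X _⦋n⦌) : ℕ :=
  n - sInf (Set.ofPred fun k : ℕ => ∃ ε : (⦋n⦌ : SimplexCategory) ⟶ ⦋k⦌,
    Function.Surjective ε.toOrderHom ∧ ∃ y : X _⦋k⦌, x = X.map ε.op y)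

/-- `i` reduces `x` when `dgn (x δᵢ) = dgn x - 1`. -/
def Reduces (X : SSet) {n : ℕ} (i : Fin (n + 2)) (x : X _⦋n + 1⦌) : Prop :=
  dgn X (X.map (SimplexCategory.δ i).op x) + 1 = dgn X x

/-- `i` properly reduces `x` when `x = x δᵢ σᵢ`. -/
def ProperlyReduces (X : SSet) {n : ℕ} (i : Fin (n + 1)) (x : X _⦋n + 1⦌) : Prop :=
  x = X.map (SimplexCategory.σ i).op (X.map (SimplexCategory.δ i.castSucc).op x)

/-- A `(K+2)`-sphere: a family `c₀, …, c_{K+2}` of `(K+1)`-simplices satisfying the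
cycle equations `cⱼ δᵢ = cᵢ δ_{j-1}` for `i < j` (here reindexed: `c_{j+1} δᵢ = cᵢ δⱼ`
for `i ≤ j`). -/
def IsSphere (X : SSet) {K : ℕ} (c : Fin (K + 3) → X _⦋K + 1⦌) : Prop :=
  ∀ i j : Fin (K + 2), i ≤ j →
    X.map (SimplexCategory.δ i).op (c j.succ) = X.map (SimplexCategory.δ j).op (c i.castSucc)

/-- `y` fills the sphere `c` when `y δᵢ = cᵢ` for all `i`. -/
def IsFiller (X : SSet) {K : ℕ} (y : X _⦋K + 2⦌) (c : Fin (K + 3) → X _⦋K + 1⦌) : Prop :=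
  ∀ i : Fin (K + 3), X.map (SimplexCategory.δ i).op y = c i


set_option linter.unusedVariables false



variable (X : SSet)

def NSet {n : ℕ} (x : X _⦋n⦌) : Set ℕ :=
  Set.ofPred fun k : ℕ => ∃ ε : (⦋n⦌ : SimplexCategory) ⟶ ⦋k⦌,
    Function.Surjective ε.toOrderHom ∧ ∃ y : X _⦋k⦌, x = X.map ε.op y

lemma dgn_def {n : ℕ} (x : X _⦋n⦌) : dgn X x = n - sInf (NSet X x) := rfl

lemma map_map {a b c : SimplexCategory} (f : a ⟶ b) (g : b ⟶ c) (z : X.obj (Opposite.op c)) :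
    X.map (f ≫ g).op z = X.map f.op (X.map g.op z) := by
  rw [CategoryTheory.op_comp, X.map_comp]; rfl

lemma self_mem_NSet {n : ℕ} (x : X _⦋n⦌) : n ∈ NSet X x := by
  refine ⟨𝟙 _, ?_, x, by simp⟩
  intro t; exact ⟨t, rfl⟩

lemma NSet_nonempty {n : ℕ} (x : X _⦋n⦌) : (NSet X x).Nonempty := ⟨n, self_mem_NSet X x⟩

lemma sInf_NSet_le_dim {n : ℕ} (x : X _⦋n⦌) : sInf (NSet X x) ≤ n :=
  Nat.sInf_le (self_mem_NSet X x)

lemma sInf_add_dgn {n : ℕ} (x : X _⦋n⦌) : sInf (NSet X x) + dgn X x = n := by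
  have := sInf_NSet_le_dim X x
  rw [dgn_def]; omega

lemma dgn_le_dim {n : ℕ} (x : X _⦋n⦌) : dgn X x ≤ n := Nat.sub_le _ _

lemma exists_min_witness {n : ℕ} (x : X _⦋n⦌) : sInf (NSet X x) ∈ NSet X x :=
  Nat.sInf_mem (NSet_nonempty X x)

lemma min_witness {n : ℕ} (x : X _⦋n⦌) : ∃ (k : ℕ) (ε : (⦋n⦌ : SimplexCategory) ⟶ ⦋k⦌)
    (y : X _⦋k⦌), Function.Surjective ε.toOrderHom ∧ x = X.map ε.op y ∧ k + dgn X x = n ∧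
    ∀ k' ∈ NSet X x, k ≤ k' := by
  obtain ⟨ε, hε, y, hxy⟩ := exists_min_witness X x
  exact ⟨_, ε, y, hε, hxy, sInf_add_dgn X x, fun k' h => Nat.sInf_le h⟩

lemma surj_comp {a b c : SimplexCategory} (f : a ⟶ b) (g : b ⟶ c)
    (hf : Function.Surjective f.toOrderHom) (hg : Function.Surjective g.toOrderHom) :
    Function.Surjective (f ≫ g).toOrderHom := by
  rw [SimplexCategory.comp_toOrderHom]
  exact hg.comp hf

lemma exists_epi_mono {n k : ℕ} (f : (⦋n⦌ : SimplexCategory) ⟶ ⦋k⦌) :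
    ∃ (j : ℕ) (e : (⦋n⦌ : SimplexCategory) ⟶ ⦋j⦌) (μ : (⦋j⦌ : SimplexCategory) ⟶ ⦋k⦌),
      Function.Surjective e.toOrderHom ∧ f = e ≫ μ ∧ j ≤ k ∧
      (¬ Function.Surjective f.toOrderHom → j < k) := by
  have h2 : Mono (image.ι f) := inferInstance
  refine ⟨(image f).len, factorThruImage f ≫ eqToHom (SimplexCategory.mk_len _).symm,
    eqToHom (SimplexCategory.mk_len _) ≫ image.ι f, ?_, ?_, ?_, ?_⟩
  · rw [← SimplexCategory.epi_iff_surjective]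
    infer_instance
  · simp
  · have := SimplexCategory.len_le_of_mono (image.ι f)
    simpa using this
  · intro hns
    have hle : (image f).len ≤ k := by
      have := SimplexCategory.len_le_of_mono (image.ι f); simpa using this
    rcases Nat.lt_or_ge (image f).len k with h | h
    · exact h
    · exfalso
      have hjk : (image f).len = k := le_antisymm hle h
      apply hns
      rw [← SimplexCategory.epi_iff_surjective]
      have hmono : Mono (eqToHom (SimplexCategory.mk_len (image f)) ≫ image.ι f) :=
        mono_comp _ _
      have hepi2 : Epi (eqToHom (SimplexCategory.mk_len (image f)) ≫ image.ι f) := by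
        have hbij : Function.Bijective (eqToHom (SimplexCategory.mk_len (image f)) ≫ image.ι f).toOrderHom := by
          have hinj : Function.Injective (eqToHom (SimplexCategory.mk_len (image f)) ≫ image.ι f).toOrderHom :=
            SimplexCategory.mono_iff_injective.mp hmono
          have hcard : Fintype.card (Fin ((⦋(image f).len⦌ : SimplexCategory).len + 1))
              = Fintype.card (Fin ((⦋k⦌ : SimplexCategory).len + 1)) := by
            simp [hjk]
          exact (Fintype.bijective_iff_injective_and_card _).mpr ⟨hinj, hcard⟩
        rw [SimplexCategory.epi_iff_surjective]
        exact hbij.surjective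
      have : Epi ((factorThruImage f ≫ eqToHom (SimplexCategory.mk_len _).symm) ≫
          (eqToHom (SimplexCategory.mk_len (image f)) ≫ image.ι f)) := by
        have : Epi (factorThruImage f ≫ eqToHom (SimplexCategory.mk_len _).symm) := epi_comp _ _
        exact epi_comp _ _
      simpa using this

/-- Applying any simplicial operator can only decrease the `sInf` of the `NSet`. -/
lemma sInf_NSet_map_le {n m : ℕ} (x : X _⦋m⦌) (g : (⦋n⦌ : SimplexCategory) ⟶ ⦋m⦌) :
    sInf (NSet X (X.map g.op x)) ≤ sInf (NSet X x) := by
  obtain ⟨k, ε, y, hε, hxy, hsum, hmin⟩ := min_witness X x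
  obtain ⟨j, e, μ, he, hfac, hjk, -⟩ := exists_epi_mono (g ≫ ε)
  have hmem : j ∈ NSet X (X.map g.op x) := by
    refine ⟨e, he, X.map μ.op y, ?_⟩
    calc X.map g.op x = X.map (g ≫ ε).op y := by rw [hxy, map_map]
    _ = X.map (e ≫ μ).op y := by rw [hfac]
    _ = X.map e.op (X.map μ.op y) := map_map X e μ y
  have h2 := sInf_add_dgn X x
  have := Nat.sInf_le hmem
  omega

lemma dgn_face_ge {n : ℕ} (x : X _⦋n + 1⦌) (i : Fin (n + 2)) :
    dgn X x ≤ dgn X (X.map (SimplexCategory.δ i).op x) + 1 := by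
  have h1 := sInf_NSet_map_le X x (SimplexCategory.δ i)
  have h2 := sInf_add_dgn X x
  have h3 := sInf_add_dgn X (X.map (SimplexCategory.δ i).op x)
  omega

lemma dgn_sigma {n : ℕ} (w : X _⦋n⦌) (j : Fin (n + 1)) :
    dgn X (X.map (SimplexCategory.σ j).op w) = dgn X w + 1 := by
  have h1 := sInf_NSet_map_le X w (SimplexCategory.σ j)
  have hw : X.map (SimplexCategory.δ j.castSucc).op (X.map (SimplexCategory.σ j).op w) = w := by
    rw [← map_map, SimplexCategory.δ_comp_σ_self]
    simp
  have h2 := sInf_NSet_map_le X (X.map (SimplexCategory.σ j).op w) (SimplexCategory.δ j.castSucc)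
  rw [hw] at h2
  have h3 := sInf_add_dgn X w
  have h4 := sInf_add_dgn X (X.map (SimplexCategory.σ j).op w)
  omega

lemma pr_dgn {n : ℕ} {x : X _⦋n + 1⦌} {j : Fin (n + 1)} (h : ProperlyReduces X j x) :
    dgn X (X.map (SimplexCategory.δ j.castSucc).op x) + 1 = dgn X x := by
  conv_rhs => rw [h]
  rw [dgn_sigma]

lemma delta_apply {n : ℕ} (i : Fin (n+2)) (t : Fin (n+1)) :
    (SimplexCategory.δ i).toOrderHom t = i.succAbove t := rfl

lemma sigma_apply {n : ℕ} (j : Fin (n+1)) (t : Fin (n+2)) :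
    (SimplexCategory.σ j).toOrderHom t = j.predAbove t := rfl

lemma succAbove_predAbove_succgap {n : ℕ} (j : Fin (n+1)) (t : Fin (n+2)) (ht : t ≠ j.succ) :
    (j.succ).succAbove (j.predAbove t) = t := by
  rcases Fin.lt_or_lt_of_ne ht with h | h
  · have h1 : t ≤ j.castSucc := Fin.le_castSucc_iff.mpr h
    have hlast : t ≠ Fin.last (n+1) := by
      intro h'
      rw [h'] at h1
      exact absurd (lt_of_le_of_lt h1 (Fin.castSucc_lt_last j)) (lt_irrefl _)
    rw [Fin.predAbove_of_le_castSucc _ _ h1]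
    exact Fin.succAbove_castPred_of_lt _ _ h
  · have h1 : j.castSucc < t := lt_trans (Fin.castSucc_lt_succ (i := j)) h
    rw [Fin.predAbove_of_castSucc_lt _ _ h1]
    exact Fin.succAbove_pred_of_lt _ _ h

lemma succAbove_predAbove_selfgap {n : ℕ} (j : Fin (n+1)) :
    (j.succ).succAbove (j.predAbove j.succ) = j.castSucc := by
  rw [Fin.predAbove_of_castSucc_lt _ _ (Fin.castSucc_lt_succ (i := j)), Fin.pred_succ,
    Fin.succAbove_of_castSucc_lt _ _ (Fin.castSucc_lt_succ (i := j))]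

lemma pr_of_pair {n k : ℕ} (x : X _⦋n + 1⦌) (ε : (⦋n+1⦌ : SimplexCategory) ⟶ ⦋k⦌) (y : X _⦋k⦌)
    (hxy : x = X.map ε.op y) (j : Fin (n + 1))
    (hj : ε.toOrderHom j.castSucc = ε.toOrderHom j.succ) : ProperlyReduces X j x := by
  have key : (SimplexCategory.σ j ≫ SimplexCategory.δ j.succ) ≫ ε = ε := by
    apply SimplexCategory.Hom.ext
    apply OrderHom.ext; funext t
    rw [SimplexCategory.comp_toOrderHom, SimplexCategory.comp_toOrderHom]
    simp only [OrderHom.comp_coe, Function.comp_apply]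
    rcases eq_or_ne t j.succ with rfl | ht
    · rw [sigma_apply, delta_apply, succAbove_predAbove_selfgap]
      exact hj
    · rw [sigma_apply, delta_apply, succAbove_predAbove_succgap j t ht]
  have hx2 : x = X.map (SimplexCategory.σ j).op (X.map (SimplexCategory.δ j.succ).op x) := by
    conv_lhs => rw [hxy, ← key]
    rw [map_map, map_map, ← hxy]
  have h2 : X.map (SimplexCategory.δ j.castSucc).op x = X.map (SimplexCategory.δ j.succ).op x := by
    conv_lhs => rw [hx2]
    rw [← map_map, SimplexCategory.δ_comp_σ_self]
    simp
  rw [ProperlyReduces, h2]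
  exact hx2


/-- If a face strictly drops the degeneracy, then `x` is properly reduced at `i` or `i-1`. -/
lemma exists_pr_of_dgn_lt {n : ℕ} (x : X _⦋n + 1⦌) (i : Fin (n + 2))
    (h : dgn X (X.map (SimplexCategory.δ i).op x) < dgn X x) :
    ∃ j : Fin (n + 1), ProperlyReduces X j x ∧ (((j : ℕ) = i) ∨ ((j : ℕ) + 1 = i)) := by
  obtain ⟨k, ε, y, hε, hxy, hsum, hmin⟩ := min_witness X x
  by_cases hA : ∃ j : Fin (n + 1), (((j : ℕ) = i) ∨ ((j : ℕ) + 1 = i)) ∧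
      ε.toOrderHom j.castSucc = ε.toOrderHom j.succ
  · obtain ⟨j, hji, hj⟩ := hA
    exact ⟨j, pr_of_pair X x ε y hxy j hj, hji⟩
  · exfalso
    push_neg at hA
    have hmono := ε.toOrderHom.monotone
    have hmiss : ∀ t : Fin (n + 1), ε.toOrderHom (i.succAbove t) ≠ ε.toOrderHom i := by
      intro t
      rcases lt_or_ge t.castSucc i with hlt | hle
      · rw [Fin.succAbove_of_castSucc_lt _ _ hlt]
        have hltv : (t : ℕ) < (i : ℕ) := by simpa [Fin.lt_def] using hlt
        have hi1 : 1 ≤ (i : ℕ) := by omega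
        set j0 : Fin (n + 1) := ⟨(i : ℕ) - 1, by omega⟩ with hj0
        have hne := hA j0 (Or.inr (by simp [hj0]; omega))
        have hlt2 : ε.toOrderHom j0.castSucc < ε.toOrderHom j0.succ :=
          lt_of_le_of_ne (hmono (by simp [Fin.le_def])) hne
        have hle3 : ε.toOrderHom t.castSucc ≤ ε.toOrderHom j0.castSucc := by
          apply hmono
          simp only [Fin.le_def, Fin.coe_castSucc, hj0]
          omega
        have hsucc : j0.succ = i := by
          apply Fin.ext
          simp [hj0]
          omega
        intro hEq
        rw [← hsucc] at hEq
        exact (ne_of_lt (lt_of_le_of_lt hle3 hlt2)) hEq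
      · rw [Fin.succAbove_of_le_castSucc _ _ hle]
        have hi2 : (i : ℕ) ≤ n := by
          have := t.isLt
          have : (t.castSucc : ℕ) = (t : ℕ) := rfl
          simp only [Fin.le_def, Fin.coe_castSucc] at hle
          omega
        set j1 : Fin (n + 1) := ⟨(i : ℕ), by omega⟩ with hj1
        have hne := hA j1 (Or.inl (by simp [hj1]))
        have hlt2 : ε.toOrderHom j1.castSucc < ε.toOrderHom j1.succ :=
          lt_of_le_of_ne (hmono (by simp [Fin.le_def])) hne
        have hle3 : ε.toOrderHom j1.succ ≤ ε.toOrderHom t.succ := by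
          apply hmono
          simp only [Fin.le_def, Fin.val_succ, hj1]
          simp only [Fin.le_def, Fin.coe_castSucc] at hle
          omega
        have hcs : j1.castSucc = i := by
          apply Fin.ext; simp [hj1]
        intro hEq
        rw [← hcs] at hEq
        exact (ne_of_lt (lt_of_lt_of_le hlt2 hle3)) hEq.symm
    have hns : ¬ Function.Surjective (SimplexCategory.δ i ≫ ε).toOrderHom := by
      intro hs
      obtain ⟨t, ht⟩ := hs (ε.toOrderHom i)
      rw [SimplexCategory.comp_toOrderHom] at ht
      exact hmiss t ht
    obtain ⟨j, e, μ, he, hfac, hjk, hlt⟩ := exists_epi_mono (SimplexCategory.δ i ≫ ε)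
    have hjlt : j < k := hlt hns
    have hmem : j ∈ NSet X (X.map (SimplexCategory.δ i).op x) := by
      refine ⟨e, he, X.map μ.op y, ?_⟩
      calc X.map (SimplexCategory.δ i).op x = X.map (SimplexCategory.δ i ≫ ε).op y := by
            rw [hxy, map_map]
      _ = X.map (e ≫ μ).op y := by rw [hfac]
      _ = X.map e.op (X.map μ.op y) := map_map X e μ y
    have h1 := Nat.sInf_le hmem
    have h2 := sInf_add_dgn X (X.map (SimplexCategory.δ i).op x)
    omega

open scoped Classical in
/-- There are at least `dgn x` properly reducing indices. -/
lemma card_pr {n : ℕ} (x : X _⦋n + 1⦌) :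
    dgn X x ≤ (Finset.univ.filter (fun j : Fin (n + 1) => ProperlyReduces X j x)).card := by
  classical
  obtain ⟨k, ε, y, hε, hxy, hsum, hmin⟩ := min_witness X x
  have hmono := ε.toOrderHom.monotone
  set Q := Finset.univ.filter
    (fun j : Fin (n + 1) => ε.toOrderHom j.castSucc = ε.toOrderHom j.succ) with hQ
  have hQP : Q ⊆ Finset.univ.filter (fun j : Fin (n + 1) => ProperlyReduces X j x) := by
    intro j hj
    simp only [hQ, Finset.mem_filter, Finset.mem_univ, true_and] at hj ⊢
    exact pr_of_pair X x ε y hxy j hj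
  refine le_trans ?_ (Finset.card_le_card hQP)
  have hcompl : (Finset.univ.filter
      (fun j : Fin (n + 1) => ¬ ε.toOrderHom j.castSucc = ε.toOrderHom j.succ)).card ≤ k := by
    have : (Finset.univ.filter
        (fun j : Fin (n + 1) => ¬ ε.toOrderHom j.castSucc = ε.toOrderHom j.succ)).card ≤
        (Finset.range k).card := by
      apply Finset.card_le_card_of_injOn (fun j => ((ε.toOrderHom j.castSucc : Fin (k+1)) : ℕ))
      · intro j hj
        simp only [Finset.coe_filter, Set.mem_setOf_eq, Finset.mem_filter, Finset.mem_univ, true_and] at hj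
        have hlt2 : ε.toOrderHom j.castSucc < ε.toOrderHom j.succ :=
          lt_of_le_of_ne (hmono (by simp [Fin.le_def])) hj
        have h5 : (ε.toOrderHom j.succ : ℕ) ≤ k := by
          have := (ε.toOrderHom j.succ).isLt
          simp only [SimplexCategory.len_mk] at this
          omega
        simp only [Finset.mem_coe, Finset.mem_range, Fin.lt_def] at hlt2 ⊢
        omega
      · intro a ha b hb hab
        simp only [Finset.mem_coe, Finset.mem_filter, Finset.mem_univ, true_and] at ha hb
        by_contra hne
        simp only at hab
        rcases Fin.lt_or_lt_of_ne hne with h | h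
        · have h1 : ε.toOrderHom a.castSucc < ε.toOrderHom a.succ :=
            lt_of_le_of_ne (hmono (by simp [Fin.le_def])) ha
          have h2 : ε.toOrderHom a.succ ≤ ε.toOrderHom b.castSucc := by
            apply hmono
            simp only [Fin.le_def, Fin.val_succ, Fin.coe_castSucc]
            exact h
          have h3 := lt_of_lt_of_le h1 h2
          simp only [Fin.lt_def] at h3
          omega
        · have h1 : ε.toOrderHom b.castSucc < ε.toOrderHom b.succ :=
            lt_of_le_of_ne (hmono (by simp [Fin.le_def])) hb
          have h2 : ε.toOrderHom b.succ ≤ ε.toOrderHom a.castSucc := by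
            apply hmono
            simp only [Fin.le_def, Fin.val_succ, Fin.coe_castSucc]
            exact h
          have h3 := lt_of_lt_of_le h1 h2
          simp only [Fin.lt_def] at h3
          omega
    simpa using this
  have htot := Finset.card_filter_add_card_filter_not
    (s := (Finset.univ : Finset (Fin (n + 1))))
    (p := fun j => ε.toOrderHom j.castSucc = ε.toOrderHom j.succ)
  simp only [Finset.card_univ, Fintype.card_fin] at htot
  rw [← hQ] at htot
  omega


lemma d_s_succ {n : ℕ} (j : Fin (n + 1)) (w : X _⦋n⦌) :
    X.map (SimplexCategory.δ j.succ).op (X.map (SimplexCategory.σ j).op w) = w := by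
  rw [← map_map, SimplexCategory.δ_comp_σ_succ]
  simp

lemma d_s_self {n : ℕ} (j : Fin (n + 1)) (w : X _⦋n⦌) :
    X.map (SimplexCategory.δ j.castSucc).op (X.map (SimplexCategory.σ j).op w) = w := by
  rw [← map_map, SimplexCategory.δ_comp_σ_self]
  simp

lemma d_s_gt {n : ℕ} (i : Fin (n + 2)) (j : Fin (n + 1)) (H : j.castSucc < i) (w : X _⦋n + 1⦌) :
    X.map (SimplexCategory.δ i.succ).op (X.map (SimplexCategory.σ j.castSucc).op w)
      = X.map (SimplexCategory.σ j).op (X.map (SimplexCategory.δ i).op w) := by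
  rw [← map_map, ← map_map, SimplexCategory.δ_comp_σ_of_gt H]

lemma s_s {n : ℕ} (i : Fin (n + 1)) (q : X _⦋n⦌) :
    X.map (SimplexCategory.σ i.castSucc).op (X.map (SimplexCategory.σ i).op q)
      = X.map (SimplexCategory.σ i.succ).op (X.map (SimplexCategory.σ i).op q) := by
  rw [← map_map, ← map_map, SimplexCategory.σ_comp_σ (le_refl i)]

variable {X}

lemma cyc {K : ℕ} {c : Fin (K + 3) → X _⦋K + 1⦌} (hc : IsSphere X c)
    (i j : ℕ) (hij : i ≤ j) (hj : j ≤ K + 1)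
    (hi2 : i < K + 2) (hj2 : j < K + 2) (hj3 : j + 1 < K + 3) (hi3 : i < K + 3) :
    X.map (SimplexCategory.δ ⟨i, hi2⟩).op (c ⟨j + 1, hj3⟩)
      = X.map (SimplexCategory.δ ⟨j, hj2⟩).op (c ⟨i, hi3⟩) := by
  exact hc ⟨i, hi2⟩ ⟨j, hj2⟩ hij

lemma pr_mk {n : ℕ} {t : ℕ} {ht : t < n + 1} {ht' : t < n + 2} {x : X _⦋n + 1⦌}
    (h : ProperlyReduces X ⟨t, ht⟩ x) :
    x = X.map (SimplexCategory.σ ⟨t, ht⟩).op (X.map (SimplexCategory.δ ⟨t, ht'⟩).op x) := by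
  rw [ProperlyReduces, Fin.castSucc_mk] at h
  exact h

lemma pr_dgn_mk {n : ℕ} {t : ℕ} {ht : t < n + 1} {ht' : t < n + 2} {x : X _⦋n + 1⦌}
    (h : ProperlyReduces X ⟨t, ht⟩ x) :
    dgn X (X.map (SimplexCategory.δ ⟨t, ht'⟩).op x) + 1 = dgn X x := by
  have := pr_dgn X h
  rw [Fin.castSucc_mk] at this
  exact this


section Sphere

variable {K : ℕ} {c : Fin (K + 3) → X _⦋K + 1⦌} {r mv : ℕ} {hmv : mv < K + 3}

lemma stepA (hc : IsSphere X c) (hm : dgn X (c ⟨mv, hmv⟩) = r)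
    (hstrict : ∀ (u : ℕ) (hu : u < K + 3), u < mv → r + 1 ≤ dgn X (c ⟨u, hu⟩)) :
    ∀ (t : ℕ) (ht : t < K + 1), ProperlyReduces X ⟨t, ht⟩ (c ⟨mv, hmv⟩) → mv ≤ t := by
  intro t ht hPR
  by_contra hlt
  push_neg at hlt
  have pt2 : t < K + 2 := by omega
  have pt3 : t < K + 3 := by omega
  have pm2 : mv - 1 < K + 2 := by omega
  have pm3 : mv - 1 + 1 < K + 3 := by omega
  have h1 : dgn X (X.map (SimplexCategory.δ (⟨t, pt2⟩ : Fin (K + 2))).op (c ⟨mv, hmv⟩)) + 1 = r := by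
    rw [← hm]
    exact pr_dgn_mk hPR
  have h2 := cyc hc t (mv - 1) (by omega) (by omega) pt2 pm2 pm3 pt3
  have hmm : (⟨mv - 1 + 1, pm3⟩ : Fin (K + 3)) = ⟨mv, hmv⟩ := Fin.ext (by simp; omega)
  rw [hmm] at h2
  rw [h2] at h1
  have h3 := dgn_face_ge X (c ⟨t, pt3⟩) ⟨mv - 1, pm2⟩
  have h4 := hstrict t pt3 hlt
  omega

lemma keyLem (hc : IsSphere X c) (hm : dgn X (c ⟨mv, hmv⟩) = r)
    (hr : ∀ u : Fin (K + 3), r ≤ dgn X (c u)) (hr1 : 1 ≤ r)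
    (hstrict : ∀ (u : ℕ) (hu : u < K + 3), u < mv → r + 1 ≤ dgn X (c ⟨u, hu⟩))
    (t : ℕ) (ht : t < K + 1) (htm : mv ≤ t) (h1 : t + 1 < K + 3) (h2 : mv < K + 1)
    (hPR : ProperlyReduces X ⟨t, ht⟩ (c ⟨mv, hmv⟩)) :
    dgn X (c ⟨t + 1, h1⟩) = r ∧ ProperlyReduces X (⟨mv, h2⟩ : Fin (K + 1)) (c ⟨t + 1, h1⟩) := by
  have pt2 : t < K + 2 := by omega
  have pm2 : mv < K + 2 := by omega
  have pm12 : mv - 1 < K + 2 := by omega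
  have pm13 : mv - 1 < K + 3 := by omega
  have hd : dgn X (X.map (SimplexCategory.δ (⟨t, pt2⟩ : Fin (K + 2))).op (c ⟨mv, hmv⟩)) + 1 = r := by
    rw [← hm]
    exact pr_dgn_mk hPR
  have hcy := cyc hc mv t htm (by omega) pm2 pt2 h1 hmv
  rw [← hcy] at hd
  have hle := dgn_face_ge X (c ⟨t + 1, h1⟩) ⟨mv, pm2⟩
  have hge := hr ⟨t + 1, h1⟩
  have heq : dgn X (c ⟨t + 1, h1⟩) = r := by omega
  have hlt : dgn X (X.map (SimplexCategory.δ (⟨mv, pm2⟩ : Fin (K + 2))).op (c ⟨t + 1, h1⟩))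
      < dgn X (c ⟨t + 1, h1⟩) := by omega
  obtain ⟨j, hjPR, hjcase⟩ := exists_pr_of_dgn_lt X (c ⟨t + 1, h1⟩) ⟨mv, pm2⟩ hlt
  rcases hjcase with hj | hj
  · have hj' : (j : ℕ) = mv := hj
    have hjeq : j = ⟨mv, h2⟩ := Fin.ext hj'
    rw [hjeq] at hjPR
    exact ⟨heq, hjPR⟩
  · exfalso
    have hj' : (j : ℕ) + 1 = mv := hj
    have hjeq : j = ⟨mv - 1, by omega⟩ := Fin.ext (by simp; omega)
    rw [hjeq] at hjPR
    have hpd := pr_dgn_mk (ht' := pm12) hjPR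
    have hcy2 := cyc hc (mv - 1) t (by omega) (by omega) pm12 pt2 h1 pm13
    rw [hcy2] at hpd
    have h3 := dgn_face_ge X (c ⟨mv - 1, pm13⟩) ⟨t, pt2⟩
    have h4 := hstrict (mv - 1) pm13 (by omega)
    omega


/-- The tight endgame: if `c_m = s_{b+1} v`, `c_{m+1} = s_b v` and `c_{b+3} = s_m v`,
then `v` is degenerate at `b` and the two simplices agree. -/
lemma tight {L : ℕ} {c : Fin (L + 4) → X _⦋L + 2⦌} (hc : IsSphere X c)
    {mv b : ℕ} (hmb : mv + 1 ≤ b) (hbL : b + 1 < L + 2)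
    (hmv : mv < L + 4) (hm1 : mv + 1 < L + 4) (hb3 : b + 3 < L + 4)
    (pm : mv < L + 2) (pb1 : b + 1 < L + 2) (pb : b < L + 2)
    (v : X _⦋L + 1⦌)
    (e1 : c ⟨mv, hmv⟩ = X.map (SimplexCategory.σ ⟨b + 1, pb1⟩).op v)
    (e2 : c ⟨mv + 1, hm1⟩ = X.map (SimplexCategory.σ ⟨b, pb⟩).op v)
    (e3 : c ⟨b + 3, hb3⟩ = X.map (SimplexCategory.σ ⟨mv, pm⟩).op v) :
    c ⟨mv, hmv⟩ = c ⟨mv + 1, hm1⟩ := by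
  have p1 : mv + 1 < L + 3 := by omega
  have p2 : b + 2 < L + 3 := by omega
  have pbL1 : b < L + 1 := by omega
  have hcy := cyc hc (mv + 1) (b + 2) (by omega) (by omega) p1 p2 hb3 hm1
  have hL : X.map (SimplexCategory.δ (⟨mv + 1, p1⟩ : Fin (L + 3))).op (c ⟨b + 3, hb3⟩) = v := by
    rw [e3]
    exact d_s_succ X ⟨mv, pm⟩ v
  have hR : X.map (SimplexCategory.δ (⟨b + 2, p2⟩ : Fin (L + 3))).op (c ⟨mv + 1, hm1⟩)
      = X.map (SimplexCategory.σ (⟨b, pbL1⟩ : Fin (L + 1))).op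
          (X.map (SimplexCategory.δ (⟨b + 1, pb1⟩ : Fin (L + 2))).op v) := by
    rw [e2]
    exact d_s_gt X ⟨b + 1, pb1⟩ ⟨b, pbL1⟩ (by simp [Fin.lt_def]) v
  have hcy' : X.map (SimplexCategory.δ (⟨mv + 1, p1⟩ : Fin (L + 3))).op (c ⟨b + 3, hb3⟩)
      = X.map (SimplexCategory.δ (⟨b + 2, p2⟩ : Fin (L + 3))).op (c ⟨mv + 1, hm1⟩) := hcy
  have hv : v = X.map (SimplexCategory.σ (⟨b, pbL1⟩ : Fin (L + 1))).op
      (X.map (SimplexCategory.δ (⟨b + 1, pb1⟩ : Fin (L + 2))).op v) := by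
    conv_lhs => rw [← hL, hcy', hR]
  rw [e1, e2]
  conv_lhs => rw [hv]
  conv_rhs => rw [hv]
  exact (s_s X ⟨b, pbL1⟩ (X.map (SimplexCategory.δ (⟨b + 1, pb1⟩ : Fin (L + 2))).op v)).symm

end Sphere


/-- If all faces of a sphere `c` of dimension `k = K + 2` have degeneracy at least 2,
`r` is the minimal degeneracy, `m` is the first face of degeneracy `r`, and
`k < 2r + 3`, then `c_m = c_{m+1}`. -/
theorem mplus1_d (X : SSet) (K : ℕ) (c : Fin (K + 3) → X _⦋K + 1⦌) (hc : IsSphere X c)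
    (r : ℕ) (hr : ∀ u : Fin (K + 3), r ≤ dgn X (c u))
    (m : Fin (K + 3)) (hm : dgn X (c m) = r)
    (hmmin : ∀ u : Fin (K + 3), dgn X (c u) = r → m ≤ u)
    (hdeg : ∀ u : Fin (K + 3), 2 ≤ dgn X (c u))
    (hk : K + 2 < 2 * r + 3) :
    ∃ h : (m : ℕ) + 1 < K + 3, c m = c ⟨(m : ℕ) + 1, h⟩ := by
  classical
  obtain ⟨mv, hmv⟩ := m
  have hr2 : 2 ≤ r := by
    have h := hdeg ⟨mv, hmv⟩
    omega
  have hstrict : ∀ (u : ℕ) (hu : u < K + 3), u < mv → r + 1 ≤ dgn X (c ⟨u, hu⟩) := by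
    intro u hu hlt
    have h1 := hr ⟨u, hu⟩
    rcases eq_or_lt_of_le h1 with he | hl
    · exfalso
      have h2 := hmmin ⟨u, hu⟩ he.symm
      rw [Fin.mk_le_mk] at h2
      omega
    · omega
  have hcard := card_pr X (c ⟨mv, hmv⟩)
  have hPmne : (Finset.univ.filter
      (fun j : Fin (K + 1) => ProperlyReduces X j (c ⟨mv, hmv⟩))).Nonempty := by
    apply Finset.card_pos.mp
    omega
  obtain ⟨⟨t1v, ht1lt⟩, ht1mem, ht1min⟩ :
      ∃ t : Fin (K + 1), t ∈ (Finset.univ.filter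
        (fun j : Fin (K + 1) => ProperlyReduces X j (c ⟨mv, hmv⟩))) ∧
        ∀ s ∈ (Finset.univ.filter
          (fun j : Fin (K + 1) => ProperlyReduces X j (c ⟨mv, hmv⟩))), t ≤ s :=
    ⟨_, Finset.min'_mem _ hPmne, fun s hs => Finset.min'_le _ _ hs⟩
  have ht1PR : ProperlyReduces X ⟨t1v, ht1lt⟩ (c ⟨mv, hmv⟩) := (Finset.mem_filter.mp ht1mem).2
  have hA := stepA (hmv := hmv) hc hm hstrict
  have hA1 : mv ≤ t1v := hA t1v ht1lt ht1PR
  have pmK1 : mv < K + 1 := by omega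
  have pm2 : mv < K + 2 := by omega
  have hgoal1 : mv + 1 < K + 3 := by omega
  refine ⟨hgoal1, ?_⟩
  show c ⟨mv, hmv⟩ = c ⟨mv + 1, hgoal1⟩
  by_cases hmP : ProperlyReduces X ⟨mv, pmK1⟩ (c ⟨mv, hmv⟩)
  · obtain ⟨hdg1, hPR1⟩ := keyLem hc hm hr (by omega) hstrict mv pmK1 le_rfl hgoal1 pmK1 hmP
    have hcy := cyc hc mv mv le_rfl (by omega) pm2 pm2 hgoal1 hmv
    have e1 := pr_mk (ht' := pm2) hmP
    have e2 := pr_mk (ht' := pm2) hPR1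
    rw [hcy] at e2
    rw [e2, ← e1]
  · have hm1t : mv + 1 ≤ t1v := by
      rcases eq_or_lt_of_le hA1 with he | hl
      · exfalso
        apply hmP
        have hU : (⟨t1v, ht1lt⟩ : Fin (K + 1)) = ⟨mv, pmK1⟩ := Fin.ext he.symm
        rw [hU] at ht1PR
        exact ht1PR
      · omega
    have pt1K2 : t1v < K + 2 := by omega
    have pt1p3 : t1v + 1 < K + 3 := by omega
    have pmv1K2 : mv + 1 < K + 2 := by omega
    obtain ⟨hdgt1, hPRmt1⟩ := keyLem hc hm hr (by omega) hstrict t1v ht1lt hA1 pt1p3 pmK1 ht1PR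
    have hsz := pr_mk (ht' := pm2) hPRmt1
    have hz : dgn X (X.map (SimplexCategory.δ (⟨mv, pm2⟩ : Fin (K + 2))).op
        (c ⟨t1v + 1, pt1p3⟩)) + 1 = r := by
      have h := pr_dgn_mk (ht' := pm2) hPRmt1
      rw [hdgt1] at h
      exact h
    have hd1 : X.map (SimplexCategory.δ (⟨mv + 1, pmv1K2⟩ : Fin (K + 2))).op (c ⟨t1v + 1, pt1p3⟩)
        = X.map (SimplexCategory.δ (⟨mv, pm2⟩ : Fin (K + 2))).op (c ⟨t1v + 1, pt1p3⟩) := by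
      conv_lhs => rw [hsz]
      exact d_s_succ X ⟨mv, pmK1⟩ _
    have hcy3 : X.map (SimplexCategory.δ (⟨mv + 1, pmv1K2⟩ : Fin (K + 2))).op (c ⟨t1v + 1, pt1p3⟩)
        = X.map (SimplexCategory.δ (⟨t1v, pt1K2⟩ : Fin (K + 2))).op (c ⟨mv + 1, hgoal1⟩) :=
      cyc hc (mv + 1) t1v hm1t (by omega) pmv1K2 pt1K2 pt1p3 hgoal1
    have hzeq : X.map (SimplexCategory.δ (⟨t1v, pt1K2⟩ : Fin (K + 2))).op (c ⟨mv + 1, hgoal1⟩)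
        = X.map (SimplexCategory.δ (⟨mv, pm2⟩ : Fin (K + 2))).op (c ⟨t1v + 1, pt1p3⟩) := by
      rw [← hcy3, hd1]
    have hr' : dgn X (c ⟨mv + 1, hgoal1⟩) = r := by
      have h5 := dgn_face_ge X (c ⟨mv + 1, hgoal1⟩) ⟨t1v, pt1K2⟩
      rw [hzeq] at h5
      have h6 := hr ⟨mv + 1, hgoal1⟩
      omega
    have hflt : dgn X (X.map (SimplexCategory.δ (⟨t1v, pt1K2⟩ : Fin (K + 2))).op
        (c ⟨mv + 1, hgoal1⟩)) < dgn X (c ⟨mv + 1, hgoal1⟩) := by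
      rw [hzeq, hr']
      omega
    obtain ⟨⟨j2v, hj2lt⟩, hj2PR, hj2c⟩ :=
      exists_pr_of_dgn_lt X (c ⟨mv + 1, hgoal1⟩) ⟨t1v, pt1K2⟩ hflt
    rcases hj2c with hj2 | hj2
    · have hj2v : j2v = t1v := hj2
      have hU : (⟨j2v, hj2lt⟩ : Fin (K + 1)) = ⟨t1v, ht1lt⟩ := Fin.ext hj2v
      rw [hU] at hj2PR
      have eB := pr_mk (ht' := pt1K2) hj2PR
      rw [hzeq] at eB
      have eA := pr_mk (ht' := pt1K2) ht1PR
      have hcy4 := cyc hc mv t1v hA1 (by omega) pm2 pt1K2 pt1p3 hmv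
      rw [← hcy4] at eA
      rw [eA, eB]
    · have hj2v : j2v + 1 = t1v := hj2
      have hdmge : r ≤ dgn X (X.map (SimplexCategory.δ (⟨mv, pm2⟩ : Fin (K + 2))).op
          (c ⟨mv, hmv⟩)) := by
        by_contra hh
        push_neg at hh
        have hh2 : dgn X (X.map (SimplexCategory.δ (⟨mv, pm2⟩ : Fin (K + 2))).op (c ⟨mv, hmv⟩))
            < dgn X (c ⟨mv, hmv⟩) := by
          rw [hm]
          omega
        obtain ⟨⟨j5v, hj5lt⟩, hj5PR, hj5c⟩ :=
          exists_pr_of_dgn_lt X (c ⟨mv, hmv⟩) ⟨mv, pm2⟩ hh2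
        rcases hj5c with h5 | h5
        · have h5v : j5v = mv := h5
          apply hmP
          have hU : (⟨j5v, hj5lt⟩ : Fin (K + 1)) = ⟨mv, pmK1⟩ := Fin.ext h5v
          rw [hU] at hj5PR
          exact hj5PR
        · have h5v : j5v + 1 = mv := h5
          have := hA j5v hj5lt hj5PR
          omega
      have hmP1 : ¬ ProperlyReduces X ⟨mv, pmK1⟩ (c ⟨mv + 1, hgoal1⟩) := by
        intro hPR
        have heq2 := pr_mk (ht' := pm2) hPR
        have hcymm := cyc hc mv mv le_rfl (by omega) pm2 pm2 hgoal1 hmv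
        rw [hcymm] at heq2
        have h7 : dgn X (c ⟨mv + 1, hgoal1⟩)
            = dgn X (X.map (SimplexCategory.δ (⟨mv, pm2⟩ : Fin (K + 2))).op (c ⟨mv, hmv⟩)) + 1 := by
          rw [heq2, dgn_sigma]
        omega
      have hmvj2 : mv + 1 ≤ j2v := by
        have hge : mv ≤ j2v := by omega
        rcases eq_or_lt_of_le hge with he | hl
        · exfalso
          apply hmP1
          have hU : (⟨j2v, hj2lt⟩ : Fin (K + 1)) = ⟨mv, pmK1⟩ := Fin.ext he.symm
          rw [hU] at hj2PR
          exact hj2PR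
        · omega
      have pj2K2 : j2v < K + 2 := by omega
      have pj21K1 : j2v + 1 < K + 1 := by omega
      have pj21K2 : j2v + 1 < K + 2 := by omega
      have pj22K2 : j2v + 2 < K + 2 := by omega
      have pj22K3 : j2v + 2 < K + 3 := by omega
      have pj23K3 : j2v + 3 < K + 3 := by omega
      have hT1 : (⟨t1v, ht1lt⟩ : Fin (K + 1)) = ⟨j2v + 1, pj21K1⟩ := Fin.ext hj2v.symm
      have hT3 : (⟨t1v + 1, pt1p3⟩ : Fin (K + 3)) = ⟨j2v + 2, pj22K3⟩ := Fin.ext (show t1v + 1 = j2v + 2 by omega)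
      rw [hT3] at hz hd1
      rw [hT1] at ht1PR
      have e2p := pr_mk (ht' := pj2K2) hj2PR
      have hcy6 := cyc hc (mv + 1) (j2v + 1) (by omega) (by omega) pmv1K2 pj21K2 pj22K3 hgoal1
      have hcy6' : X.map (SimplexCategory.δ (⟨mv + 1, pmv1K2⟩ : Fin (K + 2))).op
            (c ⟨j2v + 2, pj22K3⟩)
          = X.map (SimplexCategory.δ (⟨j2v + 1, pj21K2⟩ : Fin (K + 2))).op
            (c ⟨mv + 1, hgoal1⟩) := hcy6
      have e2p2 : X.map (SimplexCategory.δ (⟨j2v + 1, pj21K2⟩ : Fin (K + 2))).op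
            (c ⟨mv + 1, hgoal1⟩)
          = X.map (SimplexCategory.δ (⟨j2v, pj2K2⟩ : Fin (K + 2))).op (c ⟨mv + 1, hgoal1⟩) := by
        conv_lhs => rw [e2p]
        exact d_s_succ X ⟨j2v, hj2lt⟩ _
      have hvw := (hd1.symm.trans hcy6').trans e2p2
      have e2fin : c ⟨mv + 1, hgoal1⟩ = X.map (SimplexCategory.σ (⟨j2v, hj2lt⟩ : Fin (K + 1))).op
          (X.map (SimplexCategory.δ (⟨mv, pm2⟩ : Fin (K + 2))).op (c ⟨j2v + 2, pj22K3⟩)) :=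
        e2p.trans (congrArg _ hvw.symm)
      have ea2 := pr_mk (ht' := pj21K2) ht1PR
      have hcy7 := cyc hc mv (j2v + 1) (by omega) (by omega) pm2 pj21K2 pj22K3 hmv
      have hcy7' : X.map (SimplexCategory.δ (⟨mv, pm2⟩ : Fin (K + 2))).op (c ⟨j2v + 2, pj22K3⟩)
          = X.map (SimplexCategory.δ (⟨j2v + 1, pj21K2⟩ : Fin (K + 2))).op (c ⟨mv, hmv⟩) := hcy7
      have e1fin : c ⟨mv, hmv⟩ = X.map (SimplexCategory.σ (⟨j2v + 1, pj21K1⟩ : Fin (K + 1))).op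
          (X.map (SimplexCategory.δ (⟨mv, pm2⟩ : Fin (K + 2))).op (c ⟨j2v + 2, pj22K3⟩)) :=
        ea2.trans (congrArg _ hcy7'.symm)
      have hcy8 := cyc hc mv (j2v + 2) (by omega) (by omega) pm2 pj22K2 pj23K3 hmv
      have hcy8' : X.map (SimplexCategory.δ (⟨mv, pm2⟩ : Fin (K + 2))).op (c ⟨j2v + 3, pj23K3⟩)
          = X.map (SimplexCategory.δ (⟨j2v + 2, pj22K2⟩ : Fin (K + 2))).op (c ⟨mv, hmv⟩) := hcy8
      have hda1 : X.map (SimplexCategory.δ (⟨j2v + 2, pj22K2⟩ : Fin (K + 2))).op (c ⟨mv, hmv⟩)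
          = X.map (SimplexCategory.δ (⟨mv, pm2⟩ : Fin (K + 2))).op (c ⟨j2v + 2, pj22K3⟩) := by
        conv_lhs => rw [e1fin]
        exact d_s_succ X ⟨j2v + 1, pj21K1⟩ _
      have hd0a2 := hcy8'.trans hda1
      have hfge := dgn_face_ge X (c ⟨j2v + 3, pj23K3⟩) ⟨mv, pm2⟩
      rw [hd0a2] at hfge
      have hflt3 : dgn X (X.map (SimplexCategory.δ (⟨mv, pm2⟩ : Fin (K + 2))).op
          (c ⟨j2v + 3, pj23K3⟩)) < dgn X (c ⟨j2v + 3, pj23K3⟩) := by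
        rw [hd0a2]
        have := hr ⟨j2v + 3, pj23K3⟩
        omega
      obtain ⟨⟨j5v, hj5lt⟩, hj5PR, hj5c⟩ :=
        exists_pr_of_dgn_lt X (c ⟨j2v + 3, pj23K3⟩) ⟨mv, pm2⟩ hflt3
      rcases hj5c with h5 | h5
      · have h5v : j5v = mv := h5
        have hU : (⟨j5v, hj5lt⟩ : Fin (K + 1)) = ⟨mv, pmK1⟩ := Fin.ext h5v
        rw [hU] at hj5PR
        have e3fin := (pr_mk (ht' := pm2) hj5PR).trans (congrArg _ hd0a2)
        obtain ⟨L, rfl⟩ : ∃ L, K = L + 1 := ⟨K - 1, by omega⟩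
        exact tight hc hmvj2 pj21K1 hmv hgoal1 pj23K3 pmK1 pj21K1 hj2lt _ e1fin e2fin e3fin
      · exfalso
        have h5v : j5v + 1 = mv := h5
        have pj5K2 : j5v < K + 2 := by omega
        have pj5K3 : j5v < K + 3 := by omega
        have hj5d := pr_dgn_mk (ht' := pj5K2) hj5PR
        have hcy9 := cyc hc j5v (j2v + 2) (by omega) (by omega) pj5K2 pj22K2 pj23K3 pj5K3
        have hcy9' : X.map (SimplexCategory.δ (⟨j5v, pj5K2⟩ : Fin (K + 2))).op
              (c ⟨j2v + 3, pj23K3⟩)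
            = X.map (SimplexCategory.δ (⟨j2v + 2, pj22K2⟩ : Fin (K + 2))).op
              (c ⟨j5v, pj5K3⟩) := hcy9
        rw [hcy9'] at hj5d
        have hfge2 := dgn_face_ge X (c ⟨j5v, pj5K3⟩) ⟨j2v + 2, pj22K2⟩
        have hstr := hstrict j5v pj5K3 (by omega)
        omega


end AufhebungSSet
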